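/- arXiv:1609.08076 — 2 statements merged into one kernel-verified Lean document; each statement's English description precedes it below -/
import Mathlib

section
/- Let H₀ be a Hermitian n×n complex matrix with spectral projections P_E onto its eigenspaces, and let B be an n×n complex matrix whose block-diagonal part vanishes, i.e., P_E B P_E = 0 for every eigenvalue E of H₀. Then for every η > 0 the integral ∫₀^∞ e^{−ητ} e^{iH₀τ} B e^{−iH₀τ} dτ converges absolutely, the limit Y = i lim_{η→0⁺} ∫₀^∞ e^{−ητ} e^{iH₀τ} B e^{−iH₀τ} dτ exists, and Y satisfies [H₀, Y] = −B. -/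
open MeasureTheory
open scoped InnerProductSpace

namespace Stmt4Aux

open Complex Filter

variable {E : Type*} [NormedAddCommGroup E] [NormedSpace ℂ E] [CompleteSpace E]

lemma exp_apply_eigen (A : E →L[ℂ] E) {v : E} {lam : ℂ} (h : A v = lam • v) :
    NormedSpace.exp A v = Complex.exp lam • v := by
  have hpow : ∀ k : ℕ, (A ^ k) v = lam ^ k • v := by
    intro k
    induction k with
    | zero => simp
    | succ k ih =>
        rw [pow_succ, ContinuousLinearMap.mul_apply, h, _root_.map_smul, ih, smul_smul, pow_succ,
          mul_comm]
  have hs : Summable fun k : ℕ => (k.factorial⁻¹ : ℂ) • A ^ k :=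
    NormedSpace.expSeries_summable' A
  have h1 : NormedSpace.exp A v = ∑' k : ℕ, ((k.factorial⁻¹ : ℂ) • A ^ k) v := by
    rw [NormedSpace.exp_eq_tsum (𝕂 := ℂ)]
    exact (ContinuousLinearMap.apply ℂ E v).map_tsum hs
  have h2 : ∀ k : ℕ, ((k.factorial⁻¹ : ℂ) • A ^ k) v
      = ((k.factorial⁻¹ : ℂ) * lam ^ k) • v := by
    intro k
    rw [ContinuousLinearMap.smul_apply, hpow, smul_smul]
  have hs2 : Summable fun k : ℕ => (k.factorial⁻¹ : ℂ) * lam ^ k := by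
    simpa [smul_eq_mul] using NormedSpace.expSeries_summable' (𝕂 := ℂ) lam
  rw [h1]
  simp_rw [h2]
  rw [hs2.tsum_smul_const]
  congr 1
  rw [Complex.exp_eq_exp_ℂ, NormedSpace.exp_eq_tsum (𝕂 := ℂ)]
  simp [smul_eq_mul]

lemma integrable_cexp_Ioi {z : ℂ} (hz : z.re < 0) :
    IntegrableOn (fun τ : ℝ => Complex.exp (z * τ)) (Set.Ioi (0 : ℝ)) := by
  have hc : Continuous fun τ : ℝ => Complex.exp (z * τ) := by continuity
  have hbound : IntegrableOn (fun τ : ℝ => Real.exp (z.re * τ)) (Set.Ioi (0 : ℝ)) := by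
    have := exp_neg_integrableOn_Ioi (0 : ℝ) (b := -z.re) (by linarith)
    simpa using this
  refine Integrable.mono' hbound (hc.aestronglyMeasurable.restrict) ?_
  filter_upwards with τ
  apply le_of_eq
  simp [Complex.norm_exp, Complex.mul_re]

lemma integral_cexp_Ioi {z : ℂ} (hz : z.re < 0) :
    ∫ τ in Set.Ioi (0 : ℝ), Complex.exp (z * τ) = -z⁻¹ := by
  have hz0 : z ≠ 0 := by
    intro h; rw [h] at hz; simp at hz
  have hderiv : ∀ τ ∈ Set.Ioi (0 : ℝ),
      HasDerivAt (fun τ : ℝ => z⁻¹ * Complex.exp (z * τ)) (Complex.exp (z * τ)) τ := by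
    intro τ _
    have h1 : HasDerivAt (fun τ : ℝ => (τ : ℂ)) 1 τ := by
      simpa using (hasDerivAt_id τ).ofReal_comp
    have h2 := ((h1.const_mul z).cexp).const_mul z⁻¹
    rw [mul_one, mul_left_comm, inv_mul_cancel₀ hz0, mul_one] at h2
    exact h2
  have hlin : Tendsto (fun τ : ℝ => z.re * τ) atTop atBot := by
    exact Tendsto.const_mul_atTop_of_neg hz tendsto_id
  have htop : Tendsto (fun τ : ℝ => z⁻¹ * Complex.exp (z * τ)) atTop (nhds 0) := by
    rw [tendsto_zero_iff_norm_tendsto_zero]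
    have h := (Real.tendsto_exp_atBot.comp hlin).const_mul ‖z⁻¹‖
    rw [mul_zero] at h
    refine h.congr fun τ => ?_
    rw [Function.comp_apply, norm_mul]
    congr 1
    simp [Complex.norm_exp, Complex.mul_re]
  have hcont : ContinuousWithinAt (fun τ : ℝ => z⁻¹ * Complex.exp (z * τ))
      (Set.Ici (0 : ℝ)) 0 := by
    exact (by continuity : Continuous fun τ : ℝ => z⁻¹ * Complex.exp (z * τ)).continuousWithinAt
  have := integral_Ioi_of_hasDerivAt_of_tendsto hcont hderiv (integrable_cexp_Ioi hz) htop
  simpa using this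

end Stmt4Aux


set_option maxHeartbeats 1000000 in
/-- For Hermitian `H₀` and `B` whose block-diagonal part (with respect to the
eigenspaces of `H₀`) vanishes, the regularized integral
`Y = i lim_{η→0⁺} ∫₀^∞ e^{−ητ} e^{iH₀τ} B e^{−iH₀τ} dτ` converges absolutely for
every `η > 0`, the limit exists, and `[H₀, Y] = −B`. -/
theorem stmt_4 {n : ℕ}
    (H₀ B : EuclideanSpace ℂ (Fin n) →L[ℂ] EuclideanSpace ℂ (Fin n))
    (hH : IsSelfAdjoint H₀)
    (hblock : ∀ (μ : ℂ) (v w : EuclideanSpace ℂ (Fin n)),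
      v ∈ Module.End.eigenspace (H₀ : EuclideanSpace ℂ (Fin n) →ₗ[ℂ] EuclideanSpace ℂ (Fin n)) μ →
      w ∈ Module.End.eigenspace (H₀ : EuclideanSpace ℂ (Fin n) →ₗ[ℂ] EuclideanSpace ℂ (Fin n)) μ →
      ⟪w, B v⟫_ℂ = 0) :
    (∀ η : ℝ, 0 < η →
      Integrable (fun τ : ℝ => Real.exp (-η * τ) •
          (NormedSpace.exp ((Complex.I * (τ : ℂ)) • H₀) * B *
            NormedSpace.exp (-((Complex.I * (τ : ℂ)) • H₀))))
        (volume.restrict (Set.Ioi (0 : ℝ))))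
    ∧ ∃ Y : EuclideanSpace ℂ (Fin n) →L[ℂ] EuclideanSpace ℂ (Fin n),
        Filter.Tendsto (fun η : ℝ => Complex.I •
            ∫ τ in Set.Ioi (0 : ℝ), Real.exp (-η * τ) •
              (NormedSpace.exp ((Complex.I * (τ : ℂ)) • H₀) * B *
                NormedSpace.exp (-((Complex.I * (τ : ℂ)) • H₀))))
          (nhdsWithin 0 (Set.Ioi 0)) (nhds Y)
        ∧ H₀ * Y - Y * H₀ = -B := by
  classical
  have hsym : (H₀ : EuclideanSpace ℂ (Fin n) →ₗ[ℂ] EuclideanSpace ℂ (Fin n)).IsSymmetric :=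
    hH.isSymmetric
  have hrank : Module.finrank ℂ (EuclideanSpace ℂ (Fin n)) = n := finrank_euclideanSpace_fin
  set b : OrthonormalBasis (Fin n) ℂ (EuclideanSpace ℂ (Fin n)) :=
    hsym.eigenvectorBasis hrank with hbdef
  set μ : Fin n → ℝ := hsym.eigenvalues hrank with hμdef
  have hb : ∀ i, H₀ (b i) = (μ i : ℂ) • b i := fun i => hsym.apply_eigenvectorBasis hrank i
  set β : Fin n × Fin n → ℂ := fun p => ⟪b p.1, B (b p.2)⟫_ℂ with hβdef
  set T : Fin n × Fin n →
      (EuclideanSpace ℂ (Fin n) →L[ℂ] EuclideanSpace ℂ (Fin n)) :=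
    fun p => (innerSL ℂ (b p.2)).smulRight (b p.1) with hTdef
  set c : Fin n × Fin n → ℝ := fun p => μ p.1 - μ p.2 with hcdef
  have hβ0 : ∀ p : Fin n × Fin n, μ p.1 = μ p.2 → β p = 0 := by
    intro p hp
    refine hblock ((μ p.1 : ℂ)) (b p.2) (b p.1) ?_ ?_
    · rw [Module.End.mem_eigenspace_iff, hp]
      exact hb p.2
    · rw [Module.End.mem_eigenspace_iff]
      exact hb p.1
  have hexp1 : ∀ (τ : ℝ) (k : Fin n),
      NormedSpace.exp ((Complex.I * (τ : ℂ)) • H₀) (b k)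
        = Complex.exp (Complex.I * (τ : ℂ) * (μ k : ℂ)) • b k := by
    intro τ k
    refine Stmt4Aux.exp_apply_eigen _ ?_
    rw [ContinuousLinearMap.smul_apply, hb, smul_smul]
  have hexp2 : ∀ (τ : ℝ) (k : Fin n),
      NormedSpace.exp (-((Complex.I * (τ : ℂ)) • H₀)) (b k)
        = Complex.exp (-(Complex.I * (τ : ℂ) * (μ k : ℂ))) • b k := by
    intro τ k
    refine Stmt4Aux.exp_apply_eigen _ ?_
    rw [ContinuousLinearMap.neg_apply, ContinuousLinearMap.smul_apply, hb, smul_smul, neg_smul]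
  have hext : ∀ (f g : EuclideanSpace ℂ (Fin n) →L[ℂ] EuclideanSpace ℂ (Fin n)),
      (∀ k, f (b k) = g (b k)) → f = g := by
    intro f g h
    apply ContinuousLinearMap.coe_injective
    refine b.toBasis.ext fun k => ?_
    simpa using h k
  have horto : ∀ i j : Fin n, ⟪b i, b j⟫_ℂ = if i = j then 1 else 0 := fun i j =>
    orthonormal_iff_ite.mp b.orthonormal i j
  have hTapp : ∀ (p : Fin n × Fin n) (x : EuclideanSpace ℂ (Fin n)),
      T p x = ⟪b p.2, x⟫_ℂ • b p.1 := by
    intro p x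
    simp [hTdef]
  have hBk : ∀ k, B (b k) = ∑ i, β (i, k) • b i := by
    intro k
    exact (b.sum_repr' (B (b k))).symm
  -- key pointwise representation of the integrand
  have key : ∀ η τ : ℝ,
      Real.exp (-η * τ) • (NormedSpace.exp ((Complex.I * (τ : ℂ)) • H₀) * B *
          NormedSpace.exp (-((Complex.I * (τ : ℂ)) • H₀)))
        = ∑ p : Fin n × Fin n,
            (Complex.exp ((-(η : ℂ) + (c p : ℂ) * Complex.I) * (τ : ℂ)) * β p) • T p := by
    intro η τ
    have hsc : ∀ i k : Fin n,
        Complex.exp ((-(η : ℂ) + (c (i, k) : ℂ) * Complex.I) * (τ : ℂ))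
          = (Real.exp (-η * τ) : ℂ) *
              (Complex.exp (-(Complex.I * (τ : ℂ) * (μ k : ℂ))) *
                Complex.exp (Complex.I * (τ : ℂ) * (μ i : ℂ))) := by
      intro i k
      rw [Complex.ofReal_exp, ← Complex.exp_add, ← Complex.exp_add]
      congr 1
      simp only [hcdef]
      push_cast
      ring
    refine hext _ _ fun k => ?_
    have hL : (Real.exp (-η * τ) • (NormedSpace.exp ((Complex.I * (τ : ℂ)) • H₀) * B *
          NormedSpace.exp (-((Complex.I * (τ : ℂ)) • H₀)))) (b k)
        = ∑ i, ((Real.exp (-η * τ) : ℂ) *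
            (Complex.exp (-(Complex.I * (τ : ℂ) * (μ k : ℂ))) *
              Complex.exp (Complex.I * (τ : ℂ) * (μ i : ℂ))) * β (i, k)) • b i := by
      rw [ContinuousLinearMap.smul_apply, ContinuousLinearMap.mul_apply,
        ContinuousLinearMap.mul_apply, hexp2, _root_.map_smul, hBk, _root_.map_smul, map_sum]
      simp_rw [_root_.map_smul, hexp1]
      rw [Finset.smul_sum, Finset.smul_sum]
      refine Finset.sum_congr rfl fun i _ => ?_
      rw [← algebraMap_smul ℂ (Real.exp (-η * τ))]
      simp only [smul_smul]
      congr 1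
      simp only [Complex.coe_algebraMap]
      ring
    rw [hL, ContinuousLinearMap.sum_apply, Fintype.sum_prod_type]
    refine Finset.sum_congr rfl fun i _ => ?_
    rw [Finset.sum_eq_single k]
    · rw [ContinuousLinearMap.smul_apply, hTapp, horto, if_pos rfl, one_smul, hsc i k]
    · intro j _ hj
      rw [ContinuousLinearMap.smul_apply, hTapp, horto, if_neg hj, zero_smul, smul_zero]
    · intro h
      exact absurd (Finset.mem_univ k) h
  -- integrability of each scalar coefficient
  have hre : ∀ (η : ℝ) (p : Fin n × Fin n), (-(η : ℂ) + (c p : ℂ) * Complex.I).re = -η := by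
    intro η p
    simp
  have hsint : ∀ (η : ℝ), 0 < η → ∀ p : Fin n × Fin n,
      IntegrableOn (fun τ : ℝ =>
        Complex.exp ((-(η : ℂ) + (c p : ℂ) * Complex.I) * (τ : ℂ)) * β p) (Set.Ioi 0) := by
    intro η hη p
    exact (Stmt4Aux.integrable_cexp_Ioi (z := -(η : ℂ) + (c p : ℂ) * Complex.I)
      (by rw [hre]; linarith)).mul_const _
  have hInt : ∀ η : ℝ, 0 < η →
      Integrable (fun τ : ℝ => Real.exp (-η * τ) •
          (NormedSpace.exp ((Complex.I * (τ : ℂ)) • H₀) * B *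
            NormedSpace.exp (-((Complex.I * (τ : ℂ)) • H₀))))
        (volume.restrict (Set.Ioi (0 : ℝ))) := by
    intro η hη
    have heq : (fun τ : ℝ => Real.exp (-η * τ) •
          (NormedSpace.exp ((Complex.I * (τ : ℂ)) • H₀) * B *
            NormedSpace.exp (-((Complex.I * (τ : ℂ)) • H₀))))
        = fun τ : ℝ => ∑ p : Fin n × Fin n,
            (Complex.exp ((-(η : ℂ) + (c p : ℂ) * Complex.I) * (τ : ℂ)) * β p) • T p :=
      funext fun τ => key η τ
    rw [heq]
    exact integrable_finset_sum _ fun p _ => (hsint η hη p).smul_const (T p)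
  refine ⟨hInt, ?_⟩
  -- value of the integral for η > 0
  have hIval : ∀ η : ℝ, 0 < η →
      (∫ τ in Set.Ioi (0 : ℝ), Real.exp (-η * τ) •
          (NormedSpace.exp ((Complex.I * (τ : ℂ)) • H₀) * B *
            NormedSpace.exp (-((Complex.I * (τ : ℂ)) • H₀))))
        = ∑ p : Fin n × Fin n, (-(-(η : ℂ) + (c p : ℂ) * Complex.I)⁻¹ * β p) • T p := by
    intro η hη
    simp_rw [key η]
    rw [integral_finset_sum _ fun p _ => (hsint η hη p).smul_const (T p)]
    refine Finset.sum_congr rfl fun p _ => ?_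
    rw [integral_smul_const, MeasureTheory.integral_mul_const,
      Stmt4Aux.integral_cexp_Ioi (by rw [hre]; linarith)]
  -- coefficient functions
  set g : Fin n × Fin n → ℝ → ℂ := fun p η =>
    if μ p.1 = μ p.2 then 0
    else Complex.I * (-(-(η : ℂ) + (c p : ℂ) * Complex.I)⁻¹ * β p) with hgdef
  set Y : EuclideanSpace ℂ (Fin n) →L[ℂ] EuclideanSpace ℂ (Fin n) :=
    ∑ p : Fin n × Fin n, g p 0 • T p with hYdef
  refine ⟨Y, ?_, ?_⟩
  · -- the limit
    have hfun : ∀ η ∈ Set.Ioi (0 : ℝ),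
        (∑ p : Fin n × Fin n, g p η • T p)
          = Complex.I • ∫ τ in Set.Ioi (0 : ℝ), Real.exp (-η * τ) •
              (NormedSpace.exp ((Complex.I * (τ : ℂ)) • H₀) * B *
                NormedSpace.exp (-((Complex.I * (τ : ℂ)) • H₀))) := by
      intro η hη
      rw [hIval η hη, Finset.smul_sum]
      refine Finset.sum_congr rfl fun p _ => ?_
      rw [smul_smul]
      simp only [hgdef]
      by_cases hp : μ p.1 = μ p.2
      · simp [hp, hβ0 p hp]
      · rw [if_neg hp]
    have htendg : ∀ p : Fin n × Fin n,
        Filter.Tendsto (fun η : ℝ => g p η) (nhds 0) (nhds (g p 0)) := by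
      intro p
      simp only [hgdef]
      by_cases hp : μ p.1 = μ p.2
      · simp only [if_pos hp]
        exact tendsto_const_nhds
      · simp only [if_neg hp]
        have hcr : c p ≠ 0 := by
          rw [hcdef]
          exact sub_ne_zero.mpr hp
        have hcne : (c p : ℂ) * Complex.I ≠ 0 := by
          refine mul_ne_zero ?_ Complex.I_ne_zero
          exact_mod_cast hcr
        have h1 : Filter.Tendsto (fun η : ℝ => -(η : ℂ) + (c p : ℂ) * Complex.I) (nhds 0)
            (nhds (-(0 : ℂ) + (c p : ℂ) * Complex.I)) := by
          exact ((Complex.continuous_ofReal.neg).add continuous_const).tendsto 0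
        have h2 := ((h1.inv₀ (by simpa using hcne)).neg.mul_const (β p)).const_mul Complex.I
        simpa using h2
    have htend : Filter.Tendsto (fun η : ℝ => ∑ p : Fin n × Fin n, g p η • T p)
        (nhdsWithin 0 (Set.Ioi 0)) (nhds Y) := by
      rw [hYdef]
      refine Filter.Tendsto.mono_left ?_ nhdsWithin_le_nhds
      exact tendsto_finset_sum _ fun p _ => (htendg p).smul_const (T p)
    refine htend.congr' ?_
    filter_upwards [self_mem_nhdsWithin] with η hη
    exact hfun η hη
  · -- the commutator identity
    have hmul1 : ∀ p : Fin n × Fin n, H₀ * T p = ((μ p.1 : ℂ)) • T p := by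
      intro p
      ext x
      rw [ContinuousLinearMap.mul_apply, hTapp, _root_.map_smul, hb,
        ContinuousLinearMap.smul_apply, hTapp, smul_smul, smul_smul, mul_comm]
    have hsym' : ∀ v w : EuclideanSpace ℂ (Fin n), ⟪H₀ v, w⟫_ℂ = ⟪v, H₀ w⟫_ℂ :=
      fun v w => hsym v w
    have hmul2 : ∀ p : Fin n × Fin n, T p * H₀ = ((μ p.2 : ℂ)) • T p := by
      intro p
      refine ContinuousLinearMap.ext fun x => ?_
      rw [ContinuousLinearMap.mul_apply, hTapp, ContinuousLinearMap.smul_apply, hTapp,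
        smul_smul, ← hsym' (b p.2) x, hb, inner_smul_left, Complex.conj_ofReal]
    have hBsum : B = ∑ p : Fin n × Fin n, β p • T p := by
      refine hext _ _ fun k => ?_
      rw [hBk, ContinuousLinearMap.sum_apply, Fintype.sum_prod_type]
      refine Finset.sum_congr rfl fun i _ => ?_
      rw [Finset.sum_eq_single k]
      · rw [ContinuousLinearMap.smul_apply, hTapp, horto, if_pos rfl, one_smul]
      · intro j _ hj
        rw [ContinuousLinearMap.smul_apply, hTapp, horto, if_neg hj, zero_smul, smul_zero]
      · intro h
        exact absurd (Finset.mem_univ k) h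
    rw [hYdef, hBsum, Finset.mul_sum, Finset.sum_mul, ← Finset.sum_sub_distrib, ← Finset.sum_neg_distrib]
    refine Finset.sum_congr rfl fun p _ => ?_
    rw [mul_smul_comm, smul_mul_assoc, hmul1, hmul2, smul_smul, smul_smul]
    have hco : g p 0 * (μ p.1 : ℂ) - g p 0 * (μ p.2 : ℂ) = -β p := by
      simp only [hgdef]
      by_cases hp : μ p.1 = μ p.2
      · simp [hp, hβ0 p hp]
      · rw [if_neg hp]
        have hcr : (c p : ℂ) ≠ 0 := by
          have h0 : c p ≠ 0 := by
            rw [hcdef]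
            exact sub_ne_zero.mpr hp
          exact_mod_cast h0
        have hμ12 : (μ p.1 : ℂ) - (μ p.2 : ℂ) = (c p : ℂ) := by
          rw [hcdef]; push_cast; ring
        have hz0 : -((0 : ℝ) : ℂ) + (c p : ℂ) * Complex.I = (c p : ℂ) * Complex.I := by
          push_cast; ring
        rw [hz0]
        have hIinv : Complex.I * (-((c p : ℂ) * Complex.I)⁻¹) = -(c p : ℂ)⁻¹ := by
          rw [mul_inv, Complex.inv_I]
          ring_nf
          simp [Complex.I_sq]
        have hne : (μ p.1 : ℂ) - (μ p.2 : ℂ) ≠ 0 := by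
          rw [hμ12]; exact hcr
        rw [← mul_assoc, hIinv, ← hμ12]
        field_simp
        ring
    match_scalars
    linear_combination hco
end

section
/- Let H be a Hermitian n×n complex matrix with distinct eigenvalues E₁, …, E_k and spectral projections P₁, …, P_k, and let O be any n×n complex matrix. Then the time average (1/T) ∫₀^T e^{iHt} O e^{−iHt} dt converges as T → ∞ to Ō = Σ_{j=1}^k P_j O P_j, and the limit satisfies [H, Ō] = 0. -/
open scoped ComplexInnerProductSpace in
/-- Pairwise orthogonality of a resolution of the identity by self-adjoint idempotents. -/
lemma proj_orth_aux {E : Type*} [NormedAddCommGroup E] [InnerProductSpace ℂ E]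
    [CompleteSpace E] {k : ℕ} (P : Fin k → E →L[ℂ] E)
    (hPsa : ∀ j, IsSelfAdjoint (P j))
    (hPidem : ∀ j, P j * P j = P j)
    (hPsum : ∑ j, P j = 1) :
    ∀ i j : Fin k, i ≠ j → P i * P j = 0 := by
  have key : ∀ (y : E) (j : Fin k), P j y = y → ∀ i, i ≠ j → P i y = 0 := by
    intro y j hy i hij
    have hsum' : ∀ l : Fin k, (inner ℂ y (P l y) : ℂ) = (‖P l y‖ : ℂ) ^ 2 := by
      intro l
      have h1 : (P l) y = (P l) ((P l) y) := by
        conv_lhs => rw [← hPidem l]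
        rfl
      calc (inner ℂ y (P l y) : ℂ) = inner ℂ y ((P l) ((P l) y)) := by rw [← h1]
        _ = inner ℂ y ((ContinuousLinearMap.adjoint (P l)) ((P l) y)) := by
            rw [(hPsa l).adjoint_eq]
        _ = inner ℂ ((P l) y) ((P l) y) := ContinuousLinearMap.adjoint_inner_right _ _ _
        _ = (‖(P l) y‖ : ℂ) ^ 2 := inner_self_eq_norm_sq_to_K _
    have hIP : (∑ l, (inner ℂ y ((P l) y) : ℂ)) = inner ℂ y y := by
      rw [← inner_sum]
      congr 1
      rw [← ContinuousLinearMap.sum_apply, hPsum]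
      rfl
    have h2 : (∑ l, (‖(P l) y‖ : ℝ) ^ 2) = ‖y‖ ^ 2 := by
      have := hIP
      rw [Finset.sum_congr rfl (fun l _ => hsum' l), inner_self_eq_norm_sq_to_K] at this
      refine Complex.ofReal_inj.mp ?_
      push_cast
      exact this
    have h3 : ∑ l ∈ Finset.univ.erase j, (‖(P l) y‖ : ℝ) ^ 2 = 0 := by
      have hsplit := Finset.add_sum_erase Finset.univ
        (fun l => (‖(P l) y‖ : ℝ) ^ 2) (Finset.mem_univ j)
      rw [h2] at hsplit
      simp only [hy] at hsplit
      linarith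
    have h4 : (‖(P i) y‖ : ℝ) ^ 2 = 0 :=
      (Finset.sum_eq_zero_iff_of_nonneg (fun l _ => sq_nonneg _)).1 h3 i
        (Finset.mem_erase.2 ⟨hij, Finset.mem_univ i⟩)
    have h5 : ‖(P i) y‖ = 0 := by
      have := sq_eq_zero_iff.1 h4
      exact this
    exact norm_eq_zero.1 h5
  intro i j hij
  ext x
  have hpy : P j ((P j) x) = (P j) x := by
    conv_lhs => rw [← ContinuousLinearMap.mul_apply, hPidem j]
  have := key ((P j) x) j hpy i hij
  simpa [ContinuousLinearMap.mul_apply] using this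

set_option maxHeartbeats 1000000

/-- `exp` of a linear combination of orthogonal idempotents resolving the identity. -/
lemma exp_proj_sum {A : Type*} [NormedRing A] [NormedAlgebra ℂ A] [CompleteSpace A]
    {k : ℕ} (c : Fin k → ℂ) (P : Fin k → A)
    (horth : ∀ i j : Fin k, i ≠ j → P i * P j = 0)
    (hidem : ∀ j, P j * P j = P j)
    (hsum : ∑ j, P j = 1) :
    NormedSpace.exp (∑ j, c j • P j) = ∑ j, Complex.exp (c j) • P j := by
  set A0 : A := ∑ j, c j • P j with hA0
  have hpow : ∀ m : ℕ, A0 ^ (m + 1) = ∑ j, (c j) ^ (m + 1) • P j := by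
    intro m
    induction m with
    | zero => simp [hA0]
    | succ m ih =>
      rw [pow_succ, ih, hA0, Finset.sum_mul_sum]
      refine Finset.sum_congr rfl fun j _ => ?_
      rw [Finset.sum_eq_single j]
      · rw [smul_mul_assoc, mul_smul_comm, hidem, smul_smul, ← pow_succ]
      · intro l _ hl
        rw [smul_mul_assoc, mul_smul_comm, horth j l (Ne.symm hl), smul_zero, smul_zero]
      · intro h; exact absurd (Finset.mem_univ j) h
  have hscal0 : ∀ j : Fin k, Summable (fun m : ℕ => ((Nat.factorial m : ℂ))⁻¹ * (c j) ^ m) := by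
    intro j
    simpa [smul_eq_mul] using NormedSpace.expSeries_summable' (𝕂 := ℂ) (c j)
  have hscal : ∀ j : Fin k, Summable (fun m : ℕ => ((Nat.factorial (m + 1) : ℂ))⁻¹ * (c j) ^ (m + 1)) := by
    intro j
    exact (summable_nat_add_iff (f := fun m => ((Nat.factorial m : ℂ))⁻¹ * (c j) ^ m) 1).2 (hscal0 j)
  have htail : ∀ j : Fin k,
      (∑' m : ℕ, ((Nat.factorial (m + 1) : ℂ))⁻¹ * (c j) ^ (m + 1)) = Complex.exp (c j) - 1 := by
    intro j
    have hexp : Complex.exp (c j) = ∑' m : ℕ, ((Nat.factorial m : ℂ))⁻¹ * (c j) ^ m := by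
      rw [Complex.exp_eq_exp_ℂ, NormedSpace.exp_eq_tsum ℂ]
      simp [smul_eq_mul]
    rw [hexp, Summable.tsum_eq_zero_add (hscal0 j)]
    simp
  have hsm : Summable (fun m : ℕ => ((Nat.factorial m : ℂ))⁻¹ • A0 ^ m) :=
    NormedSpace.expSeries_summable' A0
  simp only [NormedSpace.exp_eq_tsum ℂ]
  rw [Summable.tsum_eq_zero_add hsm]
  have htail2 : (∑' m : ℕ, ((Nat.factorial (m + 1) : ℂ))⁻¹ • A0 ^ (m + 1))
      = ∑ j, (Complex.exp (c j) - 1) • P j := by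
    have h1 : ∀ m : ℕ, ((Nat.factorial (m + 1) : ℂ))⁻¹ • A0 ^ (m + 1)
        = ∑ j, (((Nat.factorial (m + 1) : ℂ))⁻¹ * (c j) ^ (m + 1)) • P j := by
      intro m
      rw [hpow m, Finset.smul_sum]
      exact Finset.sum_congr rfl fun j _ => (smul_smul _ _ _)
    rw [tsum_congr h1, Summable.tsum_finsetSum (fun j _ => (hscal j).smul_const (P j))]
    exact Finset.sum_congr rfl fun j _ => by rw [Summable.tsum_smul_const (hscal j), htail j]
  rw [htail2]
  simp only [pow_zero, Nat.factorial_zero, Nat.cast_one, inv_one, one_smul]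
  rw [← hsum, ← Finset.sum_add_distrib]
  refine Finset.sum_congr rfl fun j _ => ?_
  rw [sub_smul, one_smul]
  exact add_sub_cancel _ _

set_option maxHeartbeats 1000000
set_option synthInstance.maxHeartbeats 200000

/-- For a Hermitian `H = Σ_j μ_j P_j` with distinct eigenvalues `μ_j` and spectral
projections `P_j`, the time average `(1/T)∫₀^T e^{iHt} O e^{−iHt} dt` converges as
`T → ∞` to `Ō = Σ_j P_j O P_j`, which commutes with `H`. -/
theorem stmt_8 {n k : ℕ}
    (H O : EuclideanSpace ℂ (Fin n) →L[ℂ] EuclideanSpace ℂ (Fin n))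
    (μ : Fin k → ℝ) (hμ : Function.Injective μ)
    (P : Fin k → (EuclideanSpace ℂ (Fin n) →L[ℂ] EuclideanSpace ℂ (Fin n)))
    (hPsa : ∀ j, IsSelfAdjoint (P j))
    (hPidem : ∀ j, P j * P j = P j)
    (hPsum : ∑ j, P j = 1)
    (hH : H = ∑ j, (μ j : ℂ) • P j) :
    Filter.Tendsto (fun T : ℝ => (T⁻¹ : ℝ) •
        ∫ t in (0 : ℝ)..T,
          NormedSpace.exp ((Complex.I * (t : ℂ)) • H) * O *
            NormedSpace.exp (-((Complex.I * (t : ℂ)) • H)))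
      Filter.atTop (nhds (∑ j, P j * O * P j))
    ∧ H * (∑ j, P j * O * P j) - (∑ j, P j * O * P j) * H = 0 := by
  classical
  have horth : ∀ i j : Fin k, i ≠ j → P i * P j = 0 := proj_orth_aux P hPsa hPidem hPsum
  have hexp : ∀ z : ℂ, NormedSpace.exp (z • H) = ∑ j, Complex.exp (z * (μ j : ℂ)) • P j := by
    intro z
    have hz : z • H = ∑ j, (z * (μ j : ℂ)) • P j := by
      rw [hH, Finset.smul_sum]
      exact Finset.sum_congr rfl fun j _ => (smul_smul _ _ _)
    rw [hz, exp_proj_sum _ P horth hPidem hPsum]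
  set B : Fin k → Fin k → _ := fun j l => P j * O * P l with hB
  set c : Fin k → Fin k → ℂ := fun j l => Complex.I * ((μ j : ℂ) - (μ l : ℂ)) with hc
  have hInt : ∀ t : ℝ,
      NormedSpace.exp ((Complex.I * (t : ℂ)) • H) * O *
        NormedSpace.exp (-((Complex.I * (t : ℂ)) • H))
      = ∑ j, ∑ l, Complex.exp (c j l * t) • B j l := by
    intro t
    rw [show -((Complex.I * (t : ℂ)) • H) = (-(Complex.I * (t : ℂ))) • H from (neg_smul _ _).symm,
        hexp, hexp, Finset.sum_mul, Finset.sum_mul_sum]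
    refine Finset.sum_congr rfl fun j _ => Finset.sum_congr rfl fun l _ => ?_
    rw [smul_mul_assoc, smul_mul_assoc, mul_smul_comm, smul_smul, ← Complex.exp_add]
    congr 1
    simp only [hc]
    ring
  have hcont : ∀ j l : Fin k, Continuous (fun t : ℝ => Complex.exp (c j l * t) • B j l) := by
    intro j l
    exact (Complex.continuous_exp.comp
      (continuous_const.mul Complex.continuous_ofReal)).smul continuous_const
  have hIntEq : ∀ T : ℝ, ((T⁻¹ : ℝ) •
      ∫ t in (0 : ℝ)..T,
        NormedSpace.exp ((Complex.I * (t : ℂ)) • H) * O *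
          NormedSpace.exp (-((Complex.I * (t : ℂ)) • H)))
      = ∑ j, ∑ l, ((T⁻¹ : ℝ) • ∫ t in (0 : ℝ)..T, Complex.exp (c j l * t)) • B j l := by
    intro T
    rw [intervalIntegral.integral_congr (g := fun t => ∑ j, ∑ l, Complex.exp (c j l * t) • B j l)
      (fun t _ => hInt t)]
    rw [intervalIntegral.integral_finset_sum
      (fun j _ => ((continuous_finset_sum _ (fun l _ => hcont j l)).intervalIntegrable _ _)),
      Finset.smul_sum]
    refine Finset.sum_congr rfl fun j _ => ?_
    rw [intervalIntegral.integral_finset_sum (fun l _ => ((hcont j l).intervalIntegrable _ _)),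
      Finset.smul_sum]
    refine Finset.sum_congr rfl fun l _ => ?_
    rw [intervalIntegral.integral_smul_const, smul_assoc]
  constructor
  · have h1 : (∑ j, P j * O * P j)
        = ∑ j : Fin k, ∑ l : Fin k, (if j = l then (1 : ℂ) else 0) • B j l := by
      refine Finset.sum_congr rfl fun j _ => ?_
      rw [Finset.sum_eq_single j]
      · simp [hB]
      · intro l _ hl
        rw [if_neg (Ne.symm hl)]
        exact zero_smul ℂ (B j l)
      · intro h; exact absurd (Finset.mem_univ j) h
    refine Filter.Tendsto.congr (fun T => (hIntEq T).symm) ?_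
    rw [h1]
    refine tendsto_finset_sum _ fun j _ => tendsto_finset_sum _ fun l _ => ?_
    refine Filter.Tendsto.smul_const ?_ (B j l)
    by_cases hjl : j = l
    · subst hjl
      simp only [if_pos rfl]
      have hc0 : c j j = 0 := by simp [hc]
      have hev : ∀ᶠ T in Filter.atTop,
          (1 : ℂ) = (T⁻¹ : ℝ) • ∫ t in (0 : ℝ)..T, Complex.exp (c j j * t) := by
        filter_upwards [Filter.eventually_ge_atTop (1 : ℝ)] with T hT
        have hT0 : T ≠ 0 := ne_of_gt (by linarith)
        have hone : (fun t : ℝ => Complex.exp (c j j * t)) = fun _ => (1 : ℂ) := by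
          funext t; rw [hc0]; simp
        rw [hone, intervalIntegral.integral_const, smul_smul, sub_zero,
          inv_mul_cancel₀ hT0, one_smul]
      exact Filter.Tendsto.congr' hev tendsto_const_nhds
    · simp only [if_neg hjl]
      have hcne : c j l ≠ 0 := by
        simp only [hc]
        refine mul_ne_zero Complex.I_ne_zero ?_
        rw [sub_ne_zero]
        exact fun h => hjl (hμ (Complex.ofReal_inj.mp h))
      have hnorm1 : ∀ T : ℝ, ‖Complex.exp (c j l * T)‖ = 1 := by
        intro T
        have harg : c j l * T = (((μ j - μ l) * T : ℝ) : ℂ) * Complex.I := by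
          simp only [hc]; push_cast; ring
        rw [harg, Complex.norm_exp_ofReal_mul_I]
      have hg : Filter.Tendsto (fun T : ℝ => 2 / ‖c j l‖ * T⁻¹) Filter.atTop (nhds 0) := by
        simpa using tendsto_inv_atTop_zero.const_mul (2 / ‖c j l‖)
      refine squeeze_zero_norm' ?_ hg
      filter_upwards [Filter.eventually_ge_atTop (1 : ℝ)] with T hT
      have hT0 : (0 : ℝ) < T := by linarith
      rw [integral_exp_mul_complex hcne, norm_smul, Real.norm_eq_abs,
        abs_of_nonneg (inv_nonneg.2 hT0.le), norm_div]
      have h2 : ‖Complex.exp (c j l * T) - Complex.exp (c j l * 0)‖ ≤ 2 := by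
        calc ‖Complex.exp (c j l * T) - Complex.exp (c j l * 0)‖
            ≤ ‖Complex.exp (c j l * T)‖ + ‖Complex.exp (c j l * 0)‖ := norm_sub_le _ _
          _ ≤ 2 := by rw [hnorm1 T]; simp [Complex.exp_zero]; norm_num
      calc T⁻¹ * (‖Complex.exp (c j l * T) - Complex.exp (c j l * 0)‖ / ‖c j l‖)
          ≤ T⁻¹ * (2 / ‖c j l‖) := by
            gcongr
          _ = 2 / ‖c j l‖ * T⁻¹ := mul_comm _ _
  · have hL : H * (∑ j, P j * O * P j) = ∑ j, (μ j : ℂ) • (P j * O * P j) := by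
      rw [hH, Finset.sum_mul_sum]
      refine Finset.sum_congr rfl fun i _ => ?_
      rw [Finset.sum_eq_single i]
      · rw [smul_mul_assoc]
        congr 1
        rw [show P i * (P i * O * P i) = (P i * P i) * O * P i by noncomm_ring, hPidem]
      · intro l _ hl
        rw [smul_mul_assoc,
          show P i * (P l * O * P l) = (P i * P l) * (O * P l) by noncomm_ring,
          horth i l (Ne.symm hl), zero_mul, smul_zero]
      · intro h; exact absurd (Finset.mem_univ i) h
    have hR : (∑ j, P j * O * P j) * H = ∑ j, (μ j : ℂ) • (P j * O * P j) := by
      rw [hH, Finset.sum_mul_sum]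
      refine Finset.sum_congr rfl fun i _ => ?_
      rw [Finset.sum_eq_single i]
      · rw [mul_smul_comm]
        congr 1
        rw [show (P i * O * P i) * P i = P i * O * (P i * P i) by noncomm_ring, hPidem]
      · intro l _ hl
        rw [mul_smul_comm,
          show (P i * O * P i) * P l = (P i * O) * (P i * P l) by noncomm_ring,
          horth i l (Ne.symm hl), mul_zero, smul_zero]
      · intro h; exact absurd (Finset.mem_univ i) h
    rw [hL, hR, sub_self]
end
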